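/- Consider the single-variable equation F(ω) := Σ_{j∈G} g_j(ω) + Σ_{j∈N} (c_j(ω) + h_j(ω)) = -P, where each g_j and c_j is continuous and strictly increasing with g_j(0) = c_j(0) = 0, and each h_j is continuous and nondecreasing with h_j(0) = 0. If ω₁ solves the equation with all c_j present and ω₀ solves the equation obtained by deleting the c_j terms (for the same P ≠ 0), then |ω₁| ≤ |ω₀|; moreover if ω₀ ≠ 0 and the c_j are strictly increasing, then |ω₁| < |ω₀|. That is, including controllable demand strictly reduces the magnitude of the steady state frequency deviation. -/

import Mathlib

/-- including controllable demand (the strictly increasing terms c_j)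
reduces the magnitude of the steady state frequency deviation. -/
theorem stmt_7 {ι : Type*} [DecidableEq ι] (G N : Finset ι) (hGN : G ⊆ N)
    (hG : G.Nonempty) (hN : N.Nonempty)
    (g c h : ι → ℝ → ℝ)
    (hgc : ∀ j ∈ G, Continuous (g j)) (hgm : ∀ j ∈ G, StrictMono (g j))
    (hg0 : ∀ j ∈ G, g j 0 = 0)
    (hcc : ∀ j ∈ N, Continuous (c j)) (hcm : ∀ j ∈ N, StrictMono (c j))
    (hc0 : ∀ j ∈ N, c j 0 = 0)
    (hhc : ∀ j ∈ N, Continuous (h j)) (hhm : ∀ j ∈ N, Monotone (h j))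
    (hh0 : ∀ j ∈ N, h j 0 = 0)
    (P ω₁ ω₀ : ℝ) (hP : P ≠ 0)
    (h1 : ∑ j ∈ G, g j ω₁ + ∑ j ∈ N, (c j ω₁ + h j ω₁) = -P)
    (h0 : ∑ j ∈ G, g j ω₀ + ∑ j ∈ N, h j ω₀ = -P) :
    |ω₁| ≤ |ω₀| ∧ (ω₀ ≠ 0 → |ω₁| < |ω₀|) := by
  set F : ℝ → ℝ := fun ω => ∑ j ∈ G, g j ω + ∑ j ∈ N, h j ω with hF
  set C : ℝ → ℝ := fun ω => ∑ j ∈ N, c j ω with hC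
  have hFmono : StrictMono F := by
    intro a b hab
    exact add_lt_add_of_lt_of_le
      (Finset.sum_lt_sum_of_nonempty hG (fun j hj => hgm j hj hab))
      (Finset.sum_le_sum (fun j hj => hhm j hj hab.le))
  have hCmono : StrictMono C := by
    intro a b hab
    exact Finset.sum_lt_sum_of_nonempty hN (fun j hj => hcm j hj hab)
  have hF0 : F 0 = 0 := by
    simp only [hF]
    rw [Finset.sum_eq_zero hg0, Finset.sum_eq_zero hh0, add_zero]
  have hC0 : C 0 = 0 := Finset.sum_eq_zero hc0
  have h0' : F ω₀ = -P := h0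
  have h1' : F ω₁ + C ω₁ = -P := by
    simp only [hF, hC]
    rw [← h1, Finset.sum_add_distrib]; ring
  rcases hP.lt_or_gt with hPneg | hPpos
  · -- P < 0 : -P > 0, so 0 < ω₁ < ω₀
    have hω₀ : 0 < ω₀ := by
      have : F 0 < F ω₀ := by rw [hF0, h0']; linarith
      exact hFmono.lt_iff_lt.mp this
    have hω₁ : 0 < ω₁ := by
      by_contra hle
      push_neg at hle
      have h1le : F ω₁ ≤ F 0 := hFmono.monotone hle
      have h2le : C ω₁ ≤ C 0 := hCmono.monotone hle
      rw [hF0] at h1le; rw [hC0] at h2le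
      linarith
    have hCpos : 0 < C ω₁ := by
      have := hCmono hω₁; rw [hC0] at this; linarith
    have : F ω₁ < F ω₀ := by rw [h0']; linarith
    have hlt : ω₁ < ω₀ := hFmono.lt_iff_lt.mp this
    rw [abs_of_pos hω₁, abs_of_pos hω₀]
    exact ⟨hlt.le, fun _ => hlt⟩
  · -- P > 0 : -P < 0, so ω₀ < ω₁ < 0
    have hω₀ : ω₀ < 0 := by
      have : F ω₀ < F 0 := by rw [hF0, h0']; linarith
      exact hFmono.lt_iff_lt.mp this
    have hω₁ : ω₁ < 0 := by
      by_contra hle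
      push_neg at hle
      have h1le : F 0 ≤ F ω₁ := hFmono.monotone hle
      have h2le : C 0 ≤ C ω₁ := hCmono.monotone hle
      rw [hF0] at h1le; rw [hC0] at h2le
      linarith
    have hCneg : C ω₁ < 0 := by
      have := hCmono hω₁; rw [hC0] at this; linarith
    have : F ω₀ < F ω₁ := by rw [h0']; linarith
    have hlt : ω₀ < ω₁ := hFmono.lt_iff_lt.mp this
    rw [abs_of_neg hω₁, abs_of_neg hω₀]
    exact ⟨by linarith, fun _ => by linarith⟩
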